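/- arXiv:2012.07754 — 3 statements merged into one kernel-verified Lean document; each statement's English description precedes it below -/
import Mathlib

section
/- Let A ∈ ℝ^{l×m×n} be a 3-tensor and let U ∈ ℝ^{l×r₁}, V ∈ ℝ^{m×r₂}, W ∈ ℝ^{n×r₃} be matrices with orthonormal columns (UᵀU = I, VᵀV = I, WᵀW = I). Set F = A·(U,V,W) ∈ ℝ^{r₁×r₂×r₃} (the contraction of A by the transposed matrices in each mode). Then ‖A − (U,V,W)·F‖² = ‖A‖² − ‖F‖², and consequently for every core tensor G ∈ ℝ^{r₁×r₂×r₃} one has ‖A − (U,V,W)·G‖ ≥ ‖A − (U,V,W)·F‖; that is, F = A·(U,V,W) is the optimal core tensor for fixed U, V, W. -/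
/-!
STATEMENT 1: For a 3-tensor `A ∈ ℝ^{l×m×n}` and matrices `U, V, W` with
orthonormal columns, the core tensor `F = A·(U,V,W) = (Uᵀ,Vᵀ,Wᵀ)·A` satisfies
`‖A − (U,V,W)·F‖² = ‖A‖² − ‖F‖²`, and for every core tensor `G`,
`‖A − (U,V,W)·G‖ ≥ ‖A − (U,V,W)·F‖`.
-/

open scoped BigOperators
open Matrix

/-- Multilinear product of a 3-tensor by three matrices:
`((U,V,W)·A)_{ijk} = Σ_{α,β,γ} u_{iα} v_{jβ} w_{kγ} a_{αβγ}`. -/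
def tmul {l m n p q r : ℕ} (U : Matrix (Fin p) (Fin l) ℝ)
    (V : Matrix (Fin q) (Fin m) ℝ) (W : Matrix (Fin r) (Fin n) ℝ)
    (A : Fin l → Fin m → Fin n → ℝ) : Fin p → Fin q → Fin r → ℝ :=
  fun i j k => ∑ α, ∑ β, ∑ γ, U i α * V j β * W k γ * A α β γ

/-- Contraction `A·(X,Y,Z) := (Xᵀ,Yᵀ,Zᵀ)·A`. -/
def contr {l m n r₁ r₂ r₃ : ℕ} (A : Fin l → Fin m → Fin n → ℝ)
    (X : Matrix (Fin l) (Fin r₁) ℝ) (Y : Matrix (Fin m) (Fin r₂) ℝ)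
    (Z : Matrix (Fin n) (Fin r₃) ℝ) : Fin r₁ → Fin r₂ → Fin r₃ → ℝ :=
  tmul Xᵀ Yᵀ Zᵀ A

/-- Frobenius norm of a 3-tensor. -/
noncomputable def tnorm {l m n : ℕ} (A : Fin l → Fin m → Fin n → ℝ) : ℝ :=
  Real.sqrt (∑ i, ∑ j, ∑ k, (A i j k) ^ 2)

/-! ### Auxiliary definitions and lemmas -/

def mode1 {l m n p : ℕ} (M : Matrix (Fin p) (Fin l) ℝ)
    (A : Fin l → Fin m → Fin n → ℝ) : Fin p → Fin m → Fin n → ℝ :=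
  fun i j k => ∑ α, M i α * A α j k

def mode2 {l m n q : ℕ} (M : Matrix (Fin q) (Fin m) ℝ)
    (A : Fin l → Fin m → Fin n → ℝ) : Fin l → Fin q → Fin n → ℝ :=
  fun i j k => ∑ β, M j β * A i β k

def mode3 {l m n r : ℕ} (M : Matrix (Fin r) (Fin n) ℝ)
    (A : Fin l → Fin m → Fin n → ℝ) : Fin l → Fin m → Fin r → ℝ :=
  fun i j k => ∑ γ, M k γ * A i j γ

def tinner {l m n : ℕ} (A B : Fin l → Fin m → Fin n → ℝ) : ℝ :=
  ∑ i, ∑ j, ∑ k, A i j k * B i j k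

lemma sum_rot {a b c : ℕ} (f : Fin a → Fin b → Fin c → ℝ) :
    ∑ i, ∑ j, ∑ k, f i j k = ∑ j, ∑ k, ∑ i, f i j k := by
  rw [Finset.sum_comm]
  exact Finset.sum_congr rfl fun j _ => Finset.sum_comm

lemma dot_sum {p l : ℕ} (M : Matrix (Fin p) (Fin l) ℝ) (x : Fin l → ℝ) (b : Fin p → ℝ) :
    ∑ i, (∑ α, M i α * x α) * b i = ∑ α, x α * ∑ i, M i α * b i := by
  simp only [Finset.sum_mul, Finset.mul_sum]
  rw [Finset.sum_comm]
  exact Finset.sum_congr rfl fun α _ => Finset.sum_congr rfl fun i _ => by ring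

lemma tinner_mode1 {l m n p : ℕ} (M : Matrix (Fin p) (Fin l) ℝ)
    (X : Fin l → Fin m → Fin n → ℝ) (B : Fin p → Fin m → Fin n → ℝ) :
    tinner (mode1 M X) B = tinner X (mode1 Mᵀ B) := by
  simp only [tinner, mode1, transpose_apply]
  rw [sum_rot (fun i j k => (∑ α, M i α * X α j k) * B i j k),
      sum_rot (fun α j k => X α j k * ∑ i, M i α * B i j k)]
  exact Finset.sum_congr rfl fun j _ => Finset.sum_congr rfl fun k _ => dot_sum M _ _

lemma tinner_mode2 {l m n q : ℕ} (M : Matrix (Fin q) (Fin m) ℝ)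
    (X : Fin l → Fin m → Fin n → ℝ) (B : Fin l → Fin q → Fin n → ℝ) :
    tinner (mode2 M X) B = tinner X (mode2 Mᵀ B) := by
  simp only [tinner, mode2, transpose_apply]
  refine Finset.sum_congr rfl fun i _ => ?_
  rw [Finset.sum_comm, Finset.sum_comm (f := fun β k => X i β k * ∑ j, M j β * B i j k)]
  exact Finset.sum_congr rfl fun k _ => dot_sum M _ _

lemma tinner_mode3 {l m n r : ℕ} (M : Matrix (Fin r) (Fin n) ℝ)
    (X : Fin l → Fin m → Fin n → ℝ) (B : Fin l → Fin m → Fin r → ℝ) :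
    tinner (mode3 M X) B = tinner X (mode3 Mᵀ B) := by
  simp only [tinner, mode3, transpose_apply]
  exact Finset.sum_congr rfl fun i _ => Finset.sum_congr rfl fun j _ => dot_sum M _ _

lemma mode1_mode1 {l m n p p' : ℕ} (M : Matrix (Fin p') (Fin p) ℝ)
    (N : Matrix (Fin p) (Fin l) ℝ) (A : Fin l → Fin m → Fin n → ℝ) :
    mode1 M (mode1 N A) = mode1 (M * N) A := by
  funext i j k
  simp only [mode1, Matrix.mul_apply, Finset.mul_sum, Finset.sum_mul, mul_assoc]
  exact Finset.sum_comm

lemma mode2_mode2 {l m n q q' : ℕ} (M : Matrix (Fin q') (Fin q) ℝ)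
    (N : Matrix (Fin q) (Fin m) ℝ) (A : Fin l → Fin m → Fin n → ℝ) :
    mode2 M (mode2 N A) = mode2 (M * N) A := by
  funext i j k
  simp only [mode2, Matrix.mul_apply, Finset.mul_sum, Finset.sum_mul, mul_assoc]
  exact Finset.sum_comm

lemma mode3_mode3 {l m n r r' : ℕ} (M : Matrix (Fin r') (Fin r) ℝ)
    (N : Matrix (Fin r) (Fin n) ℝ) (A : Fin l → Fin m → Fin n → ℝ) :
    mode3 M (mode3 N A) = mode3 (M * N) A := by
  funext i j k
  simp only [mode3, Matrix.mul_apply, Finset.mul_sum, Finset.sum_mul, mul_assoc]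
  exact Finset.sum_comm

lemma mode1_one {l m n : ℕ} (A : Fin l → Fin m → Fin n → ℝ) :
    mode1 (1 : Matrix (Fin l) (Fin l) ℝ) A = A := by
  funext i j k
  simp [mode1, Matrix.one_apply, Finset.sum_ite_eq]

lemma mode2_one {l m n : ℕ} (A : Fin l → Fin m → Fin n → ℝ) :
    mode2 (1 : Matrix (Fin m) (Fin m) ℝ) A = A := by
  funext i j k
  simp [mode2, Matrix.one_apply, Finset.sum_ite_eq]

lemma mode3_one {l m n : ℕ} (A : Fin l → Fin m → Fin n → ℝ) :
    mode3 (1 : Matrix (Fin n) (Fin n) ℝ) A = A := by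
  funext i j k
  simp [mode3, Matrix.one_apply, Finset.sum_ite_eq]

lemma mode1_mode2 {l m n p q : ℕ} (M : Matrix (Fin p) (Fin l) ℝ)
    (N : Matrix (Fin q) (Fin m) ℝ) (A : Fin l → Fin m → Fin n → ℝ) :
    mode1 M (mode2 N A) = mode2 N (mode1 M A) := by
  funext i j k
  simp only [mode1, mode2, Finset.mul_sum]
  rw [Finset.sum_comm]
  exact Finset.sum_congr rfl fun β _ => Finset.sum_congr rfl fun α _ => by ring

lemma mode1_mode3 {l m n p r : ℕ} (M : Matrix (Fin p) (Fin l) ℝ)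
    (N : Matrix (Fin r) (Fin n) ℝ) (A : Fin l → Fin m → Fin n → ℝ) :
    mode1 M (mode3 N A) = mode3 N (mode1 M A) := by
  funext i j k
  simp only [mode1, mode3, Finset.mul_sum]
  rw [Finset.sum_comm]
  exact Finset.sum_congr rfl fun γ _ => Finset.sum_congr rfl fun α _ => by ring

lemma mode2_mode3 {l m n q r : ℕ} (M : Matrix (Fin q) (Fin m) ℝ)
    (N : Matrix (Fin r) (Fin n) ℝ) (A : Fin l → Fin m → Fin n → ℝ) :
    mode2 M (mode3 N A) = mode3 N (mode2 M A) := by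
  funext i j k
  simp only [mode2, mode3, Finset.mul_sum]
  rw [Finset.sum_comm]
  exact Finset.sum_congr rfl fun γ _ => Finset.sum_congr rfl fun β _ => by ring

lemma tmul_eq_modes {l m n p q r : ℕ} (U : Matrix (Fin p) (Fin l) ℝ)
    (V : Matrix (Fin q) (Fin m) ℝ) (W : Matrix (Fin r) (Fin n) ℝ)
    (A : Fin l → Fin m → Fin n → ℝ) :
    tmul U V W A = mode1 U (mode2 V (mode3 W A)) := by
  funext i j k
  simp only [tmul, mode1, mode2, mode3, Finset.mul_sum]
  refine Finset.sum_congr rfl fun α _ => Finset.sum_congr rfl fun β _ =>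
    Finset.sum_congr rfl fun γ _ => by ring

lemma tinner_tmul_left {l m n p q r : ℕ} (U : Matrix (Fin p) (Fin l) ℝ)
    (V : Matrix (Fin q) (Fin m) ℝ) (W : Matrix (Fin r) (Fin n) ℝ)
    (G : Fin l → Fin m → Fin n → ℝ) (B : Fin p → Fin q → Fin r → ℝ) :
    tinner (tmul U V W G) B = tinner G (tmul Uᵀ Vᵀ Wᵀ B) := by
  rw [tmul_eq_modes, tmul_eq_modes, tinner_mode1, tinner_mode2, tinner_mode3,
    ← mode2_mode3, ← mode1_mode3, ← mode1_mode2]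

lemma tinner_tmul_tmul {l m n p q r : ℕ} {U : Matrix (Fin p) (Fin l) ℝ}
    {V : Matrix (Fin q) (Fin m) ℝ} {W : Matrix (Fin r) (Fin n) ℝ}
    (hU : Uᵀ * U = 1) (hV : Vᵀ * V = 1) (hW : Wᵀ * W = 1)
    (G H : Fin l → Fin m → Fin n → ℝ) :
    tinner (tmul U V W G) (tmul U V W H) = tinner G H := by
  rw [tinner_tmul_left, tmul_eq_modes, tmul_eq_modes,
    ← mode1_mode3, ← mode2_mode3, mode3_mode3, hW, mode3_one,
    ← mode1_mode2, mode2_mode2, hV, mode2_one,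
    mode1_mode1, hU, mode1_one]

lemma tinner_comm {l m n : ℕ} (X Y : Fin l → Fin m → Fin n → ℝ) :
    tinner X Y = tinner Y X := by
  simp [tinner, mul_comm]

lemma tinner_self_nonneg {l m n : ℕ} (X : Fin l → Fin m → Fin n → ℝ) :
    0 ≤ tinner X X :=
  Finset.sum_nonneg fun _ _ => Finset.sum_nonneg fun _ _ =>
    Finset.sum_nonneg fun _ _ => mul_self_nonneg _

lemma tnorm_nonneg {l m n : ℕ} (X : Fin l → Fin m → Fin n → ℝ) :
    0 ≤ tnorm X := Real.sqrt_nonneg _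

lemma tnorm_sq {l m n : ℕ} (X : Fin l → Fin m → Fin n → ℝ) :
    tnorm X ^ 2 = tinner X X := by
  rw [tnorm, Real.sq_sqrt]
  · simp [tinner, sq]
  · positivity

lemma tinner_sub_self {l m n : ℕ} (X Y : Fin l → Fin m → Fin n → ℝ) :
    tinner (X - Y) (X - Y) = tinner X X - 2 * tinner X Y + tinner Y Y := by
  simp only [tinner, Pi.sub_apply]
  have h : ∀ (i : Fin l) (j : Fin m) (k : Fin n),
      (X i j k - Y i j k) * (X i j k - Y i j k)
        = X i j k * X i j k - 2 * (X i j k * Y i j k) + Y i j k * Y i j k :=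
    fun _ _ _ => by ring
  simp only [h, Finset.sum_add_distrib, Finset.sum_sub_distrib, Finset.mul_sum]

theorem optimal_core_tensor
    (l m n r₁ r₂ r₃ : ℕ) (A : Fin l → Fin m → Fin n → ℝ)
    (U : Matrix (Fin l) (Fin r₁) ℝ) (V : Matrix (Fin m) (Fin r₂) ℝ)
    (W : Matrix (Fin n) (Fin r₃) ℝ)
    (hU : Uᵀ * U = 1) (hV : Vᵀ * V = 1) (hW : Wᵀ * W = 1)
    (F : Fin r₁ → Fin r₂ → Fin r₃ → ℝ) (hF : F = contr A U V W) :
    tnorm (A - tmul U V W F) ^ 2 = tnorm A ^ 2 - tnorm F ^ 2 ∧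
    ∀ G : Fin r₁ → Fin r₂ → Fin r₃ → ℝ,
      tnorm (A - tmul U V W F) ≤ tnorm (A - tmul U V W G) := by
  have hadj : ∀ G : Fin r₁ → Fin r₂ → Fin r₃ → ℝ,
      tinner A (tmul U V W G) = tinner F G := by
    intro G
    rw [tinner_comm, tinner_tmul_left, ← contr, ← hF, tinner_comm]
  have key : ∀ G : Fin r₁ → Fin r₂ → Fin r₃ → ℝ,
      tnorm (A - tmul U V W G) ^ 2
        = tnorm A ^ 2 - tnorm F ^ 2 + tinner (F - G) (F - G) := by
    intro G
    rw [tnorm_sq, tinner_sub_self, tinner_tmul_tmul hU hV hW, hadj G,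
      tinner_sub_self, ← tnorm_sq, ← tnorm_sq, ← tnorm_sq]
    ring
  have hFeq : tnorm (A - tmul U V W F) ^ 2 = tnorm A ^ 2 - tnorm F ^ 2 := by
    rw [key F, sub_self]
    simp [tinner]
  refine ⟨hFeq, fun G => ?_⟩
  have h1 : tnorm (A - tmul U V W F) ^ 2 ≤ tnorm (A - tmul U V W G) ^ 2 := by
    rw [hFeq, key G]
    have := tinner_self_nonneg (F - G)
    linarith
  calc tnorm (A - tmul U V W F)
      = Real.sqrt (tnorm (A - tmul U V W F) ^ 2) := (Real.sqrt_sq (tnorm_nonneg _)).symm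
    _ ≤ Real.sqrt (tnorm (A - tmul U V W G) ^ 2) := Real.sqrt_le_sqrt h1
    _ = tnorm (A - tmul U V W G) := Real.sqrt_sq (tnorm_nonneg _)
end

section
/- Let A ∈ ℝ^{l×m×n} be a 3-tensor and let r₁ ≤ l, r₂ ≤ m, r₃ ≤ n. For every 3-tensor B ∈ ℝ^{l×m×n} whose multilinear rank is at most (r₁,r₂,r₃), one has ‖A − B‖² ≥ ‖A‖² − sup { ‖A·(X,Y,Z)‖² : X ∈ ℝ^{l×r₁}, Y ∈ ℝ^{m×r₂}, Z ∈ ℝ^{n×r₃}, XᵀX = I, YᵀY = I, ZᵀZ = I }. Moreover, for every X, Y, Z with orthonormal columns, the tensor B = (X,Y,Z)·(A·(X,Y,Z)) has multilinear rank at most (r₁,r₂,r₃) and satisfies ‖A − B‖² = ‖A‖² − ‖A·(X,Y,Z)‖². Hence the best rank-(r₁,r₂,r₃) approximation problem min ‖A−B‖² is equivalent to the maximization problem max ‖A·(X,Y,Z)‖² over matrices X, Y, Z with orthonormal columns. -/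
/-!
STATEMENT 2: For a 3-tensor `A ∈ ℝ^{l×m×n}` and `r₁ ≤ l`, `r₂ ≤ m`, `r₃ ≤ n`:
(i) every `B` of multilinear rank at most `(r₁,r₂,r₃)` satisfies
`‖A − B‖² ≥ ‖A‖² − sup {‖A·(X,Y,Z)‖² : X,Y,Z with orthonormal columns}`;
(ii) for every `X,Y,Z` with orthonormal columns, `B = (X,Y,Z)·(A·(X,Y,Z))`
has multilinear rank at most `(r₁,r₂,r₃)` and
`‖A − B‖² = ‖A‖² − ‖A·(X,Y,Z)‖²`.
Hence minimizing `‖A − B‖²` is equivalent to maximizing `‖A·(X,Y,Z)‖²`.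
-/

open scoped BigOperators
open Matrix

/-- The multilinear rank of `B` is at most `(r₁,r₂,r₃)`: the spans of the
mode-1, mode-2 and mode-3 fibers have dimensions at most `r₁`, `r₂`, `r₃`. -/
def mrankLe {l m n : ℕ} (B : Fin l → Fin m → Fin n → ℝ) (r₁ r₂ r₃ : ℕ) : Prop :=
  Module.finrank ℝ
      (Submodule.span ℝ {v : Fin l → ℝ | ∃ j k, v = fun i => B i j k}) ≤ r₁ ∧
  Module.finrank ℝ
      (Submodule.span ℝ {v : Fin m → ℝ | ∃ i k, v = fun j => B i j k}) ≤ r₂ ∧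
  Module.finrank ℝ
      (Submodule.span ℝ {v : Fin n → ℝ | ∃ i j, v = fun k => B i j k}) ≤ r₃

namespace BLR

/-- inner product of 3-tensors -/
def tdot {l m n : ℕ} (A B : Fin l → Fin m → Fin n → ℝ) : ℝ :=
  ∑ i, ∑ j, ∑ k, A i j k * B i j k

lemma pull4 {I J K A : Type*} [Fintype I] [Fintype J] [Fintype K] [Fintype A]
    (g : I → J → K → A → ℝ) :
    (∑ i, ∑ j, ∑ k, ∑ a, g i j k a) = ∑ a, ∑ i, ∑ j, ∑ k, g i j k a := by
  calc (∑ i, ∑ j, ∑ k, ∑ a, g i j k a)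
      = ∑ i, ∑ j, ∑ a, ∑ k, g i j k a :=
        Finset.sum_congr rfl fun i _ => Finset.sum_congr rfl fun j _ => Finset.sum_comm
    _ = ∑ i, ∑ a, ∑ j, ∑ k, g i j k a :=
        Finset.sum_congr rfl fun i _ => Finset.sum_comm
    _ = ∑ a, ∑ i, ∑ j, ∑ k, g i j k a := Finset.sum_comm

lemma swap6 {I J K A B C : Type*} [Fintype I] [Fintype J] [Fintype K]
    [Fintype A] [Fintype B] [Fintype C] (f : I → J → K → A → B → C → ℝ) :
    (∑ i, ∑ j, ∑ k, ∑ a, ∑ b, ∑ c, f i j k a b c)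
      = ∑ a, ∑ b, ∑ c, ∑ i, ∑ j, ∑ k, f i j k a b c := by
  calc (∑ i, ∑ j, ∑ k, ∑ a, ∑ b, ∑ c, f i j k a b c)
      = ∑ a, ∑ i, ∑ j, ∑ k, ∑ b, ∑ c, f i j k a b c := pull4 _
    _ = ∑ a, ∑ b, ∑ i, ∑ j, ∑ k, ∑ c, f i j k a b c :=
        Finset.sum_congr rfl fun a _ => pull4 _
    _ = ∑ a, ∑ b, ∑ c, ∑ i, ∑ j, ∑ k, f i j k a b c :=
        Finset.sum_congr rfl fun a _ => Finset.sum_congr rfl fun b _ => pull4 _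

lemma swap3 {I J K : Type*} [Fintype I] [Fintype J] [Fintype K] (F : I → J → K → ℝ) :
    (∑ i, ∑ j, ∑ k, F i j k) = ∑ k, ∑ j, ∑ i, F i j k := by
  calc (∑ i, ∑ j, ∑ k, F i j k) = ∑ i, ∑ k, ∑ j, F i j k :=
        Finset.sum_congr rfl fun _ _ => Finset.sum_comm
    _ = ∑ k, ∑ i, ∑ j, F i j k := Finset.sum_comm
    _ = ∑ k, ∑ j, ∑ i, F i j k := Finset.sum_congr rfl fun _ _ => Finset.sum_comm

lemma sum3_factor {I J K : Type*} [Fintype I] [Fintype J] [Fintype K]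
    (f : I → ℝ) (g : J → ℝ) (h : K → ℝ) (c : ℝ) :
    (∑ i, ∑ j, ∑ k, f i * g j * h k * c) = (∑ i, f i) * (∑ j, g j) * (∑ k, h k) * c := by
  simp only [Finset.sum_mul, Finset.mul_sum]
  rw [swap3 (F := fun i j k => f i * g j * h k * c)]

variable {l m n r₁ r₂ r₃ : ℕ}

lemma tdot_comm (A B : Fin l → Fin m → Fin n → ℝ) : tdot A B = tdot B A := by
  unfold tdot
  exact Finset.sum_congr rfl fun _ _ => Finset.sum_congr rfl fun _ _ =>
    Finset.sum_congr rfl fun _ _ => mul_comm _ _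

lemma tdot_nonneg (A : Fin l → Fin m → Fin n → ℝ) : 0 ≤ tdot A A :=
  Finset.sum_nonneg fun _ _ => Finset.sum_nonneg fun _ _ => Finset.sum_nonneg fun _ _ =>
    mul_self_nonneg _

lemma tnorm_sq (A : Fin l → Fin m → Fin n → ℝ) : tnorm A ^ 2 = tdot A A := by
  unfold tnorm tdot
  rw [Real.sq_sqrt (by positivity)]
  simp only [pow_two]

/-- adjoint identity -/
lemma tdot_tmul (X : Matrix (Fin l) (Fin r₁) ℝ) (Y : Matrix (Fin m) (Fin r₂) ℝ)
    (Z : Matrix (Fin n) (Fin r₃) ℝ) (C : Fin r₁ → Fin r₂ → Fin r₃ → ℝ)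
    (A : Fin l → Fin m → Fin n → ℝ) :
    tdot (tmul X Y Z C) A = tdot C (contr A X Y Z) := by
  simp only [tdot, contr, tmul, Matrix.transpose_apply, Finset.sum_mul, Finset.mul_sum]
  rw [swap6 (f := fun i j k a b c => X i a * Y j b * Z k c * C a b c * A i j k)]
  exact Finset.sum_congr rfl fun a _ => Finset.sum_congr rfl fun b _ =>
    Finset.sum_congr rfl fun c _ => Finset.sum_congr rfl fun i _ =>
    Finset.sum_congr rfl fun j _ => Finset.sum_congr rfl fun k _ => by ring

lemma ortho_delta (X : Matrix (Fin l) (Fin r₁) ℝ) (hX : Xᵀ * X = 1) (a b : Fin r₁) :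
    (∑ i, X i a * X i b) = if a = b then 1 else 0 := by
  have := congrArg (fun M => M a b) hX
  simpa [Matrix.mul_apply, Matrix.one_apply] using this

lemma contr_tmul (X : Matrix (Fin l) (Fin r₁) ℝ) (Y : Matrix (Fin m) (Fin r₂) ℝ)
    (Z : Matrix (Fin n) (Fin r₃) ℝ) (hX : Xᵀ * X = 1) (hY : Yᵀ * Y = 1) (hZ : Zᵀ * Z = 1)
    (C : Fin r₁ → Fin r₂ → Fin r₃ → ℝ) :
    contr (tmul X Y Z C) X Y Z = C := by
  funext a b c
  simp only [contr, tmul, Matrix.transpose_apply, Finset.mul_sum]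
  calc (∑ i, ∑ j, ∑ k, ∑ α, ∑ β, ∑ γ,
          X i a * Y j b * Z k c * (X i α * Y j β * Z k γ * C α β γ))
      = ∑ α, ∑ β, ∑ γ, ∑ i, ∑ j, ∑ k,
          (X i a * X i α) * ((Y j b * Y j β) * ((Z k c * Z k γ) * C α β γ)) := by
        rw [swap6 (f := fun i j k α β γ =>
          X i a * Y j b * Z k c * (X i α * Y j β * Z k γ * C α β γ))]
        exact Finset.sum_congr rfl fun _ _ => Finset.sum_congr rfl fun _ _ =>
          Finset.sum_congr rfl fun _ _ => Finset.sum_congr rfl fun _ _ =>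
          Finset.sum_congr rfl fun _ _ => Finset.sum_congr rfl fun _ _ => by ring
    _ = ∑ α, ∑ β, ∑ γ, (∑ i, X i a * X i α) * (∑ j, Y j b * Y j β) *
          (∑ k, Z k c * Z k γ) * C α β γ := by
        refine Finset.sum_congr rfl fun α _ => Finset.sum_congr rfl fun β _ =>
          Finset.sum_congr rfl fun γ _ => ?_
        rw [← sum3_factor (f := fun i => X i a * X i α) (g := fun j => Y j b * Y j β)
          (h := fun k => Z k c * Z k γ) (c := C α β γ)]
        exact Finset.sum_congr rfl fun _ _ => Finset.sum_congr rfl fun _ _ =>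
          Finset.sum_congr rfl fun _ _ => by ring
    _ = C a b c := by
        simp only [ortho_delta X hX, ortho_delta Y hY, ortho_delta Z hZ]
        simp [Finset.sum_ite_eq, eq_comm]

lemma tdot_sub_left (A B D : Fin l → Fin m → Fin n → ℝ) :
    tdot (A - B) D = tdot A D - tdot B D := by
  simp [tdot, sub_mul, Finset.sum_sub_distrib]

lemma tdot_sub_right (A B D : Fin l → Fin m → Fin n → ℝ) :
    tdot D (A - B) = tdot D A - tdot D B := by
  simp [tdot, mul_sub, Finset.sum_sub_distrib]

lemma dist_sq (X : Matrix (Fin l) (Fin r₁) ℝ) (Y : Matrix (Fin m) (Fin r₂) ℝ)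
    (Z : Matrix (Fin n) (Fin r₃) ℝ) (hX : Xᵀ * X = 1) (hY : Yᵀ * Y = 1) (hZ : Zᵀ * Z = 1)
    (A : Fin l → Fin m → Fin n → ℝ) (E : Fin r₁ → Fin r₂ → Fin r₃ → ℝ) :
    tdot (A - tmul X Y Z E) (A - tmul X Y Z E)
      = (tdot A A - tdot (contr A X Y Z) (contr A X Y Z))
        + tdot (E - contr A X Y Z) (E - contr A X Y Z) := by
  set C := contr A X Y Z with hC
  have h1 : tdot (tmul X Y Z E) A = tdot E C := tdot_tmul X Y Z E A
  have h2 : tdot (tmul X Y Z E) (tmul X Y Z E) = tdot E E := by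
    rw [tdot_tmul, contr_tmul X Y Z hX hY hZ]
  rw [tdot_sub_left, tdot_sub_right, tdot_sub_right, tdot_sub_left, tdot_sub_right,
    tdot_sub_right, tdot_comm A (tmul X Y Z E), h1, h2, tdot_comm C E]
  ring

lemma contr_le (X : Matrix (Fin l) (Fin r₁) ℝ) (Y : Matrix (Fin m) (Fin r₂) ℝ)
    (Z : Matrix (Fin n) (Fin r₃) ℝ) (hX : Xᵀ * X = 1) (hY : Yᵀ * Y = 1) (hZ : Zᵀ * Z = 1)
    (A : Fin l → Fin m → Fin n → ℝ) :
    tdot (contr A X Y Z) (contr A X Y Z) ≤ tdot A A := by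
  have h := dist_sq X Y Z hX hY hZ A (contr A X Y Z)
  have h0 : tdot (contr A X Y Z - contr A X Y Z) (contr A X Y Z - contr A X Y Z) = 0 := by
    simp [tdot]
  have h1 := tdot_nonneg (A - tmul X Y Z (contr A X Y Z))
  linarith

lemma proj_fix {l r : ℕ} (X : Matrix (Fin l) (Fin r) ℝ) (hX : Xᵀ * X = 1)
    (v : Fin l → ℝ)
    (hv : v ∈ Submodule.span ℝ (Set.range fun a => (fun i => X i a : Fin l → ℝ))) (i : Fin l) :
    v i = ∑ a, X i a * ∑ i', X i' a * v i' := by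
  have key : Set.EqOn (Matrix.mulVecLin (X * Xᵀ))
      ((LinearMap.id : (Fin l → ℝ) →ₗ[ℝ] (Fin l → ℝ)))
      (Set.range fun a => (fun i => X i a : Fin l → ℝ)) := by
    rintro _ ⟨a, rfl⟩
    funext i
    simp only [Matrix.mulVecLin_apply, Matrix.mulVec, Matrix.mul_apply, dotProduct,
      Matrix.transpose_apply, LinearMap.id_apply]
    calc (∑ i', (∑ b, X i b * X i' b) * X i' a)
        = ∑ b, X i b * ∑ i', X i' b * X i' a := by
          simp only [Finset.sum_mul, Finset.mul_sum]
          rw [Finset.sum_comm]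
          exact Finset.sum_congr rfl fun _ _ => Finset.sum_congr rfl fun _ _ => by ring
      _ = X i a := by
          simp only [ortho_delta X hX]
          simp
  have := LinearMap.eqOn_span key hv
  have h2 := congrFun this i
  simp only [Matrix.mulVecLin_apply, Matrix.mulVec, Matrix.mul_apply, dotProduct,
    Matrix.transpose_apply, LinearMap.id_apply] at h2
  rw [← h2]
  calc (∑ i', (∑ b, X i b * X i' b) * v i')
      = ∑ b, X i b * ∑ i', X i' b * v i' := by
        simp only [Finset.sum_mul, Finset.mul_sum]
        rw [Finset.sum_comm]
        exact Finset.sum_congr rfl fun _ _ => Finset.sum_congr rfl fun _ _ => by ring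

lemma exists_X {l r : ℕ} (hrl : r ≤ l) (V : Submodule ℝ (EuclideanSpace ℝ (Fin l)))
    (hV : Module.finrank ℝ V ≤ r) :
    ∃ X : Matrix (Fin l) (Fin r) ℝ, Xᵀ * X = 1 ∧
      ∀ v : Fin l → ℝ, WithLp.toLp 2 v ∈ V →
        v ∈ Submodule.span ℝ (Set.range fun a => (fun i => X i a : Fin l → ℝ)) := by
  set d := Module.finrank ℝ V with hdd
  have hdl : d ≤ l := by
    have := Submodule.finrank_le V
    simpa [finrank_euclideanSpace_fin] using this
  set b0 := stdOrthonormalBasis ℝ V with hb0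
  set s : Set (Fin l) := {i : Fin l | (i : ℕ) < d} with hs
  set w : Fin l → EuclideanSpace ℝ (Fin l) :=
    fun i => if h : (i : ℕ) < d then (b0 ⟨(i : ℕ), h⟩ : EuclideanSpace ℝ (Fin l)) else 0
    with hw
  have hon : Orthonormal ℝ (s.restrict w) := by
    rw [orthonormal_iff_ite]
    rintro ⟨i, hi⟩ ⟨j, hj⟩
    have hi' : (i : ℕ) < d := hi
    have hj' : (j : ℕ) < d := hj
    simp only [Set.restrict_apply, hw, dif_pos hi', dif_pos hj']
    change inner ℝ (w i) (w j) = _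
    simp only [hw, dif_pos hi', dif_pos hj']
    rw [← Submodule.coe_inner, orthonormal_iff_ite.mp b0.orthonormal]
    by_cases h : i = j
    · subst h; simp
    · rw [if_neg (by simp [Fin.ext_iff]; exact fun hh => h (Fin.ext hh)),
        if_neg (by simp [Subtype.ext_iff]; exact h)]
  have hcard : Module.finrank ℝ (EuclideanSpace ℝ (Fin l)) = Fintype.card (Fin l) := by
    simp [finrank_euclideanSpace]
  obtain ⟨b, hb⟩ := hon.exists_orthonormalBasis_extension_of_card_eq hcard
  refine ⟨Matrix.of fun i a => b (Fin.castLE hrl a) i, ?_, ?_⟩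
  · ext a a'
    have h := orthonormal_iff_ite.mp b.orthonormal (Fin.castLE hrl a) (Fin.castLE hrl a')
    rw [PiLp.inner_apply] at h
    simp only [RCLike.inner_apply, starRingEnd_apply, star_trivial] at h
    simp only [Matrix.mul_apply, Matrix.transpose_apply, Matrix.one_apply, Matrix.of_apply]
    rw [show (∑ j, (b (Fin.castLE hrl a)).ofLp j * (b (Fin.castLE hrl a')).ofLp j) = _ from
      Finset.sum_congr rfl fun _ _ => mul_comm _ _, h]
    simp [Fin.castLE_inj]
  · intro v hv
    have hmem : (⟨WithLp.toLp 2 v, hv⟩ : V) ∈ (⊤ : Submodule ℝ V) := trivial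
    rw [← b0.toBasis.span_eq] at hmem
    have h2 : WithLp.toLp 2 v ∈ Submodule.map V.subtype (Submodule.span ℝ (Set.range ⇑b0.toBasis)) :=
      ⟨⟨_, hv⟩, hmem, rfl⟩
    rw [Submodule.map_span] at h2
    have himg : (V.subtype '' Set.range ⇑b0.toBasis) ⊆
        (Set.range fun a => (b (Fin.castLE hrl a) : EuclideanSpace ℝ (Fin l))) := by
      rintro _ ⟨_, ⟨j, rfl⟩, rfl⟩
      refine ⟨⟨(j : ℕ), lt_of_lt_of_le j.2 hV⟩, ?_⟩
      set i₀ : Fin l := Fin.castLE hrl ⟨(j : ℕ), lt_of_lt_of_le j.2 hV⟩ with hi₀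
      have hjs : i₀ ∈ s := by
        simp only [hs, Set.mem_setOf_eq, hi₀, Fin.coe_castLE]
        exact j.2
      have hb' : b i₀ = w i₀ := hb i₀ hjs
      have hw' : w i₀ = (b0 j : EuclideanSpace ℝ (Fin l)) := by
        have hval : (i₀ : ℕ) < d := hjs
        simp only [hw, dif_pos hval]
        congr 1
      show b i₀ = V.subtype (b0.toBasis j)
      rw [hb', hw']
      simp [OrthonormalBasis.coe_toBasis]
    have h3 := Submodule.span_mono himg h2
    have h4 := Submodule.mem_map_of_mem (f := ((EuclideanSpace.equiv (𝕜 := ℝ) (ι := Fin l)).toLinearEquiv :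
      EuclideanSpace ℝ (Fin l) →ₗ[ℝ] (Fin l → ℝ))) h3
    rw [Submodule.map_span, ← Set.range_comp] at h4
    exact h4

end BLR

namespace BLR
variable {l m n r₁ r₂ r₃ : ℕ}

lemma span_le_finrank_le {N : ℕ} {V : Type*} [AddCommGroup V] [Module ℝ V]
    [FiniteDimensional ℝ V]
    (s : Set V) (cols : Fin N → V) (h : ∀ v ∈ s, v ∈ Submodule.span ℝ (Set.range cols)) :
    Module.finrank ℝ (Submodule.span ℝ s) ≤ N := by
  have hle : Submodule.span ℝ s ≤ Submodule.span ℝ (Set.range cols) :=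
    Submodule.span_le.mpr h
  calc Module.finrank ℝ (Submodule.span ℝ s)
      ≤ Module.finrank ℝ (Submodule.span ℝ (Set.range cols)) := Submodule.finrank_mono hle
    _ ≤ N := by simpa [Set.finrank] using finrank_range_le_card (R := ℝ) cols

lemma mrankLe_tmul (X : Matrix (Fin l) (Fin r₁) ℝ) (Y : Matrix (Fin m) (Fin r₂) ℝ)
    (Z : Matrix (Fin n) (Fin r₃) ℝ) (C : Fin r₁ → Fin r₂ → Fin r₃ → ℝ) :
    mrankLe (tmul X Y Z C) r₁ r₂ r₃ := by
  refine ⟨?_, ?_, ?_⟩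
  · refine span_le_finrank_le _ (fun a => (fun i => X i a : Fin l → ℝ)) ?_
    rintro _ ⟨j, k, rfl⟩
    have hrep : (fun i => tmul X Y Z C i j k)
        = ∑ α, (∑ β, ∑ γ, Y j β * Z k γ * C α β γ) • (fun i => X i α : Fin l → ℝ) := by
      funext i
      simp only [tmul, Finset.sum_apply, Pi.smul_apply, smul_eq_mul, Finset.sum_mul]
      exact Finset.sum_congr rfl fun _ _ => Finset.sum_congr rfl fun _ _ =>
        Finset.sum_congr rfl fun _ _ => by ring
    rw [hrep]
    exact Submodule.sum_mem _ fun α _ =>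
      Submodule.smul_mem _ _ (Submodule.subset_span ⟨α, rfl⟩)
  · refine span_le_finrank_le _ (fun b => (fun j => Y j b : Fin m → ℝ)) ?_
    rintro _ ⟨i, k, rfl⟩
    have hrep : (fun j => tmul X Y Z C i j k)
        = ∑ β, (∑ α, ∑ γ, X i α * Z k γ * C α β γ) • (fun j => Y j β : Fin m → ℝ) := by
      funext j
      simp only [tmul, Finset.sum_apply, Pi.smul_apply, smul_eq_mul, Finset.sum_mul]
      rw [Finset.sum_comm]
      exact Finset.sum_congr rfl fun _ _ => Finset.sum_congr rfl fun _ _ =>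
        Finset.sum_congr rfl fun _ _ => by ring
    rw [hrep]
    exact Submodule.sum_mem _ fun β _ =>
      Submodule.smul_mem _ _ (Submodule.subset_span ⟨β, rfl⟩)
  · refine span_le_finrank_le _ (fun c => (fun k => Z k c : Fin n → ℝ)) ?_
    rintro _ ⟨i, j, rfl⟩
    have hrep : (fun k => tmul X Y Z C i j k)
        = ∑ γ, (∑ β, ∑ α, X i α * Y j β * C α β γ) • (fun k => Z k γ : Fin n → ℝ) := by
      funext k
      simp only [tmul, Finset.sum_apply, Pi.smul_apply, smul_eq_mul, Finset.sum_mul]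
      rw [swap3 (F := fun α β γ => X i α * Y j β * Z k γ * C α β γ)]
      exact Finset.sum_congr rfl fun _ _ => Finset.sum_congr rfl fun _ _ =>
        Finset.sum_congr rfl fun _ _ => by ring
    rw [hrep]
    exact Submodule.sum_mem _ fun γ _ =>
      Submodule.smul_mem _ _ (Submodule.subset_span ⟨γ, rfl⟩)

end BLR

namespace BLR
variable {l m n r₁ r₂ r₃ : ℕ}

lemma exists_tmul_rep (hr₁ : r₁ ≤ l) (hr₂ : r₂ ≤ m) (hr₃ : r₃ ≤ n)
    (B : Fin l → Fin m → Fin n → ℝ) (hB : mrankLe B r₁ r₂ r₃) :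
    ∃ (X : Matrix (Fin l) (Fin r₁) ℝ) (Y : Matrix (Fin m) (Fin r₂) ℝ)
      (Z : Matrix (Fin n) (Fin r₃) ℝ) (E : Fin r₁ → Fin r₂ → Fin r₃ → ℝ),
      Xᵀ * X = 1 ∧ Yᵀ * Y = 1 ∧ Zᵀ * Z = 1 ∧ B = tmul X Y Z E := by
  obtain ⟨X, hX, hXmem⟩ := exists_X hr₁
    (Submodule.map ((EuclideanSpace.equiv (𝕜 := ℝ) (ι := Fin l)).symm.toLinearEquiv :
      (Fin l → ℝ) →ₗ[ℝ] EuclideanSpace ℝ (Fin l))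
      (Submodule.span ℝ {v : Fin l → ℝ | ∃ j k, v = fun i => B i j k}))
    ((LinearEquiv.finrank_map_eq _ _).le.trans hB.1)
  obtain ⟨Y, hY, hYmem⟩ := exists_X hr₂
    (Submodule.map ((EuclideanSpace.equiv (𝕜 := ℝ) (ι := Fin m)).symm.toLinearEquiv :
      (Fin m → ℝ) →ₗ[ℝ] EuclideanSpace ℝ (Fin m))
      (Submodule.span ℝ {v : Fin m → ℝ | ∃ i k, v = fun j => B i j k}))
    ((LinearEquiv.finrank_map_eq _ _).le.trans hB.2.1)
  obtain ⟨Z, hZ, hZmem⟩ := exists_X hr₃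
    (Submodule.map ((EuclideanSpace.equiv (𝕜 := ℝ) (ι := Fin n)).symm.toLinearEquiv :
      (Fin n → ℝ) →ₗ[ℝ] EuclideanSpace ℝ (Fin n))
      (Submodule.span ℝ {v : Fin n → ℝ | ∃ i j, v = fun k => B i j k}))
    ((LinearEquiv.finrank_map_eq _ _).le.trans hB.2.2)
  set B₁ : Fin r₁ → Fin m → Fin n → ℝ := fun a j k => ∑ i', X i' a * B i' j k with hB₁def
  set B₂ : Fin r₁ → Fin r₂ → Fin n → ℝ := fun a b k => ∑ j', Y j' b * B₁ a j' k with hB₂def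
  set E : Fin r₁ → Fin r₂ → Fin r₃ → ℝ := fun a b c => ∑ k', Z k' c * B₂ a b k' with hEdef
  have hB1 : ∀ i j k, B i j k = ∑ a, X i a * B₁ a j k := by
    intro i j k
    exact proj_fix X hX (fun i => B i j k)
      (hXmem _ (Submodule.mem_map_of_mem (Submodule.subset_span ⟨j, k, rfl⟩))) i
  have hB2 : ∀ a j k, B₁ a j k = ∑ b, Y j b * B₂ a b k := by
    intro a j k
    have hmem : (fun j => B₁ a j k) ∈ Submodule.span ℝ
        {v : Fin m → ℝ | ∃ i k, v = fun j => B i j k} := by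
      have hrepr : (fun j => B₁ a j k)
          = ∑ i', X i' a • (fun j => B i' j k : Fin m → ℝ) := by
        funext j
        simp [hB₁def, Finset.sum_apply, Pi.smul_apply, smul_eq_mul]
      rw [hrepr]
      exact Submodule.sum_mem _ fun i' _ =>
        Submodule.smul_mem _ _ (Submodule.subset_span ⟨i', k, rfl⟩)
    exact proj_fix Y hY (fun j => B₁ a j k) (hYmem _ (Submodule.mem_map_of_mem hmem)) j
  have hB3 : ∀ a b k, B₂ a b k = ∑ c, Z k c * E a b c := by
    intro a b k
    have hmem : (fun k => B₂ a b k) ∈ Submodule.span ℝ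
        {v : Fin n → ℝ | ∃ i j, v = fun k => B i j k} := by
      have hrepr : (fun k => B₂ a b k)
          = ∑ j', Y j' b • ∑ i', X i' a • (fun k => B i' j' k : Fin n → ℝ) := by
        funext k
        simp [hB₂def, hB₁def, Finset.sum_apply, Pi.smul_apply, smul_eq_mul, Finset.mul_sum]
      rw [hrepr]
      exact Submodule.sum_mem _ fun j' _ => Submodule.smul_mem _ _ <|
        Submodule.sum_mem _ fun i' _ =>
          Submodule.smul_mem _ _ (Submodule.subset_span ⟨i', j', rfl⟩)
    exact proj_fix Z hZ (fun k => B₂ a b k) (hZmem _ (Submodule.mem_map_of_mem hmem)) k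
  refine ⟨X, Y, Z, E, hX, hY, hZ, ?_⟩
  funext i j k
  rw [hB1 i j k]
  calc (∑ a, X i a * B₁ a j k)
      = ∑ a, X i a * ∑ b, Y j b * ∑ c, Z k c * E a b c := by
        exact Finset.sum_congr rfl fun a _ => by
          rw [hB2 a j k]
          exact congrArg _ (Finset.sum_congr rfl fun b _ => by rw [hB3 a b k])
    _ = tmul X Y Z E i j k := by
        simp only [tmul, Finset.mul_sum]
        exact Finset.sum_congr rfl fun _ _ => Finset.sum_congr rfl fun _ _ =>
          Finset.sum_congr rfl fun _ _ => by ring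

end BLR

theorem best_low_rank_equiv_max_problem
    (l m n r₁ r₂ r₃ : ℕ) (hr₁ : r₁ ≤ l) (hr₂ : r₂ ≤ m) (hr₃ : r₃ ≤ n)
    (A : Fin l → Fin m → Fin n → ℝ)
    (S : Set ℝ)
    (hS : S = {x : ℝ | ∃ (X : Matrix (Fin l) (Fin r₁) ℝ)
        (Y : Matrix (Fin m) (Fin r₂) ℝ) (Z : Matrix (Fin n) (Fin r₃) ℝ),
        Xᵀ * X = 1 ∧ Yᵀ * Y = 1 ∧ Zᵀ * Z = 1 ∧
        x = tnorm (contr A X Y Z) ^ 2}) :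
    (∀ B : Fin l → Fin m → Fin n → ℝ, mrankLe B r₁ r₂ r₃ →
        tnorm A ^ 2 - sSup S ≤ tnorm (A - B) ^ 2) ∧
    (∀ (X : Matrix (Fin l) (Fin r₁) ℝ) (Y : Matrix (Fin m) (Fin r₂) ℝ)
        (Z : Matrix (Fin n) (Fin r₃) ℝ),
        Xᵀ * X = 1 → Yᵀ * Y = 1 → Zᵀ * Z = 1 →
        mrankLe (tmul X Y Z (contr A X Y Z)) r₁ r₂ r₃ ∧
        tnorm (A - tmul X Y Z (contr A X Y Z)) ^ 2 =
          tnorm A ^ 2 - tnorm (contr A X Y Z) ^ 2) := by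
  have hbdd : BddAbove S := by
    refine ⟨tnorm A ^ 2, fun x hx => ?_⟩
    rw [hS] at hx
    obtain ⟨X, Y, Z, hX, hY, hZ, rfl⟩ := hx
    rw [BLR.tnorm_sq, BLR.tnorm_sq]
    exact BLR.contr_le X Y Z hX hY hZ A
  constructor
  · intro B hB
    obtain ⟨X, Y, Z, E, hX, hY, hZ, hBeq⟩ := BLR.exists_tmul_rep hr₁ hr₂ hr₃ B hB
    have hmemS : tnorm (contr A X Y Z) ^ 2 ∈ S := by
      rw [hS]; exact ⟨X, Y, Z, hX, hY, hZ, rfl⟩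
    have hle : tnorm (contr A X Y Z) ^ 2 ≤ sSup S := le_csSup hbdd hmemS
    have hdist := BLR.dist_sq X Y Z hX hY hZ A E
    have hnn := BLR.tdot_nonneg (E - contr A X Y Z)
    have h1 := BLR.tnorm_sq (A - B)
    have h2 := BLR.tnorm_sq A
    have h3 := BLR.tnorm_sq (contr A X Y Z)
    rw [hBeq] at h1
    rw [hBeq]
    linarith
  · intro X Y Z hX hY hZ
    refine ⟨BLR.mrankLe_tmul X Y Z (contr A X Y Z), ?_⟩
    have hdist := BLR.dist_sq X Y Z hX hY hZ A (contr A X Y Z)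
    have h0 : BLR.tdot (contr A X Y Z - contr A X Y Z) (contr A X Y Z - contr A X Y Z) = 0 := by
      simp [BLR.tdot]
    have h1 := BLR.tnorm_sq (A - tmul X Y Z (contr A X Y Z))
    have h2 := BLR.tnorm_sq A
    have h3 := BLR.tnorm_sq (contr A X Y Z)
    linarith
end

section
/- Let C ∈ ℝ^{m₁×m₂×n} be a nonnegative 3-tensor and let A ∈ ℝ^{m×m×n}, m = m₁+m₂, be the (1,2)-symmetric block tensor whose 3-slices are A(:,:,k) = [[0, C(:,:,k)], [C(:,:,k)ᵀ, 0]]. Suppose u ∈ ℝ^{m₁}, v ∈ ℝ^{m₂}, w ∈ ℝ^{n} are nonnegative unit vectors such that (u,v,w) is the unique (up to simultaneous sign changes) maximizer of |C·(x,y,z)| over unit vectors x, y, z, and that the mode-(1,2) contraction C·(u,v) ∈ ℝ^{n} satisfies C·(u,v) = τ w with τ > 0. Define U ∈ ℝ^{m×2} to be the block matrix with first column (0; v) and second column (u; 0). Then (U,U,w) solves the best rank-(2,2,1) approximation problem for A: for all X, Y ∈ ℝ^{m×2} with orthonormal columns and all unit vectors z ∈ ℝ^{n}, ‖A·(X,Y,z)‖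 ≤ ‖A·(U,U,w)‖. -/
/-!
STATEMENT 3 (Proposition on best rank-(2,2,1) approximation):
Let `C ∈ ℝ^{m₁×m₂×n}` be nonnegative and `A ∈ ℝ^{m×m×n}`, `m = m₁+m₂`, the
(1,2)-symmetric block tensor with slices `[[0, C(:,:,k)], [C(:,:,k)ᵀ, 0]]`.
If nonnegative unit vectors `(u,v,w)` are the unique (up to sign changes)
maximizer of `|C·(x,y,z)|` over unit vectors, and `C·(u,v) = τ w` with `τ > 0`,
then `(U,U,w)` with `U = [[0,u],[v,0]]` solves the best rank-(2,2,1)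
approximation problem for `A`.
The index set `Fin m₁ ⊕ Fin m₂` plays the role of `{1,…,m₁+m₂}`.
-/

open scoped BigOperators

/-- Frobenius norm of the `2×2` contraction `A·(X,Y,z)`. -/
noncomputable def cnorm {ι : Type*} [Fintype ι] {n : ℕ}
    (A : ι → ι → Fin n → ℝ) (X Y : ι → Fin 2 → ℝ) (z : Fin n → ℝ) : ℝ :=
  Real.sqrt (∑ i, ∑ j, (∑ α, ∑ β, ∑ γ, A α β γ * X α i * Y β j * z γ) ^ 2)


noncomputable def F3 {m₁ m₂ n : ℕ} (C : Fin m₁ → Fin m₂ → Fin n → ℝ)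
    (x : Fin m₁ → ℝ) (y : Fin m₂ → ℝ) (z : Fin n → ℝ) : ℝ :=
  ∑ i, ∑ j, ∑ k, C i j k * x i * y j * z k

lemma aux_sum3_swap {m₁ m₂ n : ℕ} (g : Fin m₁ → Fin m₂ → Fin n → ℝ) :
    (∑ i, ∑ j, ∑ k, g i j k) = ∑ k, ∑ i, ∑ j, g i j k :=
  calc (∑ i, ∑ j, ∑ k, g i j k) = ∑ i, ∑ k, ∑ j, g i j k :=
        Finset.sum_congr rfl fun _ _ => Finset.sum_comm
    _ = ∑ k, ∑ i, ∑ j, g i j k := Finset.sum_comm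

lemma F3_bound {m₁ m₂ n : ℕ} (C : Fin m₁ → Fin m₂ → Fin n → ℝ) (τ : ℝ) (hτ : 0 < τ)
    (hmax : ∀ (x : Fin m₁ → ℝ) (y : Fin m₂ → ℝ) (z : Fin n → ℝ),
      ∑ i, x i ^ 2 = 1 → ∑ j, y j ^ 2 = 1 → ∑ k, z k ^ 2 = 1 → |F3 C x y z| ≤ τ)
    (x : Fin m₁ → ℝ) (y : Fin m₂ → ℝ) (z : Fin n → ℝ) :
    |F3 C x y z| ≤ τ * (Real.sqrt (∑ i, x i ^ 2) * Real.sqrt (∑ j, y j ^ 2) *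
      Real.sqrt (∑ k, z k ^ 2)) := by
  by_cases hx : ∑ i, x i ^ 2 = 0
  · have hx0 : ∀ i, x i = 0 := fun i =>
      pow_eq_zero_iff two_ne_zero |>.mp
        ((Finset.sum_eq_zero_iff_of_nonneg (fun i _ => sq_nonneg (x i))).mp hx i (Finset.mem_univ i))
    simp [F3, hx0, hx]
  by_cases hy : ∑ j, y j ^ 2 = 0
  · have hy0 : ∀ j, y j = 0 := fun j =>
      pow_eq_zero_iff two_ne_zero |>.mp
        ((Finset.sum_eq_zero_iff_of_nonneg (fun j _ => sq_nonneg (y j))).mp hy j (Finset.mem_univ j))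
    simp [F3, hy0, hy]
  by_cases hz : ∑ k, z k ^ 2 = 0
  · have hz0 : ∀ k, z k = 0 := fun k =>
      pow_eq_zero_iff two_ne_zero |>.mp
        ((Finset.sum_eq_zero_iff_of_nonneg (fun k _ => sq_nonneg (z k))).mp hz k (Finset.mem_univ k))
    simp [F3, hz0, hz]
  have hx' : 0 < ∑ i, x i ^ 2 :=
    lt_of_le_of_ne (Finset.sum_nonneg fun i _ => sq_nonneg _) (Ne.symm hx)
  have hy' : 0 < ∑ j, y j ^ 2 :=
    lt_of_le_of_ne (Finset.sum_nonneg fun j _ => sq_nonneg _) (Ne.symm hy)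
  have hz' : 0 < ∑ k, z k ^ 2 :=
    lt_of_le_of_ne (Finset.sum_nonneg fun k _ => sq_nonneg _) (Ne.symm hz)
  set a := Real.sqrt (∑ i, x i ^ 2) with hadef
  set b := Real.sqrt (∑ j, y j ^ 2) with hbdef
  set c := Real.sqrt (∑ k, z k ^ 2) with hcdef
  have ha0 : 0 < a := Real.sqrt_pos.mpr hx'
  have hb0 : 0 < b := Real.sqrt_pos.mpr hy'
  have hc0 : 0 < c := Real.sqrt_pos.mpr hz'
  have ha2 : a ^ 2 = ∑ i, x i ^ 2 := Real.sq_sqrt hx'.le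
  have hb2 : b ^ 2 = ∑ j, y j ^ 2 := Real.sq_sqrt hy'.le
  have hc2 : c ^ 2 = ∑ k, z k ^ 2 := Real.sq_sqrt hz'.le
  have hxa : ∑ i, (x i / a) ^ 2 = 1 := by
    simp only [div_pow]
    rw [← Finset.sum_div, ← ha2, div_self (pow_ne_zero 2 ha0.ne')]
  have hyb : ∑ j, (y j / b) ^ 2 = 1 := by
    simp only [div_pow]
    rw [← Finset.sum_div, ← hb2, div_self (pow_ne_zero 2 hb0.ne')]
  have hzc : ∑ k, (z k / c) ^ 2 = 1 := by
    simp only [div_pow]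
    rw [← Finset.sum_div, ← hc2, div_self (pow_ne_zero 2 hc0.ne')]
  have key : F3 C (fun i => x i / a) (fun j => y j / b) (fun k => z k / c)
      = F3 C x y z / (a * b * c) := by
    simp only [F3]
    calc ∑ i, ∑ j, ∑ k, C i j k * (x i / a) * (y j / b) * (z k / c)
        = ∑ i, ∑ j, ∑ k, C i j k * x i * y j * z k / (a * b * c) :=
          Finset.sum_congr rfl fun i _ => Finset.sum_congr rfl fun j _ =>
            Finset.sum_congr rfl fun k _ => by ring
      _ = (∑ i, ∑ j, ∑ k, C i j k * x i * y j * z k) / (a * b * c) := by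
          simp only [← Finset.sum_div]
  have h := hmax _ _ _ hxa hyb hzc
  rw [key, abs_div, abs_of_pos (by positivity : (0:ℝ) < a * b * c)] at h
  exact (div_le_iff₀ (by positivity : (0:ℝ) < a * b * c)).mp h

set_option maxHeartbeats 1000000

theorem best_rank221_of_block_tensor
    (m₁ m₂ n : ℕ)
    (C : Fin m₁ → Fin m₂ → Fin n → ℝ) (hC : ∀ i j k, 0 ≤ C i j k)
    (A : (Fin m₁ ⊕ Fin m₂) → (Fin m₁ ⊕ Fin m₂) → Fin n → ℝ)
    (hA : ∀ k, (∀ i j, A (Sum.inl i) (Sum.inr j) k = C i j k) ∧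
               (∀ i j, A (Sum.inr j) (Sum.inl i) k = C i j k) ∧
               (∀ i i', A (Sum.inl i) (Sum.inl i') k = 0) ∧
               (∀ j j', A (Sum.inr j) (Sum.inr j') k = 0))
    (u : Fin m₁ → ℝ) (v : Fin m₂ → ℝ) (w : Fin n → ℝ)
    (hu0 : ∀ i, 0 ≤ u i) (hv0 : ∀ j, 0 ≤ v j) (hw0 : ∀ k, 0 ≤ w k)
    (hu : ∑ i, u i ^ 2 = 1) (hv : ∑ j, v j ^ 2 = 1) (hw : ∑ k, w k ^ 2 = 1)
    -- `(u,v,w)` maximizes `|C·(x,y,z)|` over unit vectors …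
    (hmax : ∀ (x : Fin m₁ → ℝ) (y : Fin m₂ → ℝ) (z : Fin n → ℝ),
      ∑ i, x i ^ 2 = 1 → ∑ j, y j ^ 2 = 1 → ∑ k, z k ^ 2 = 1 →
      |∑ i, ∑ j, ∑ k, C i j k * x i * y j * z k| ≤
        ∑ i, ∑ j, ∑ k, C i j k * u i * v j * w k)
    -- … and is the unique maximizer, up to simultaneous sign changes.
    (huniq : ∀ (x : Fin m₁ → ℝ) (y : Fin m₂ → ℝ) (z : Fin n → ℝ),
      ∑ i, x i ^ 2 = 1 → ∑ j, y j ^ 2 = 1 → ∑ k, z k ^ 2 = 1 →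
      |∑ i, ∑ j, ∑ k, C i j k * x i * y j * z k| =
        ∑ i, ∑ j, ∑ k, C i j k * u i * v j * w k →
      ∃ ε δ γ : ℝ, (ε = 1 ∨ ε = -1) ∧ (δ = 1 ∨ δ = -1) ∧ (γ = 1 ∨ γ = -1) ∧
        x = ε • u ∧ y = δ • v ∧ z = γ • w)
    (τ : ℝ) (hτ : 0 < τ)
    -- mode-(1,2) contraction: `C·(u,v) = τ w`
    (hCuv : ∀ k, (∑ i, ∑ j, C i j k * u i * v j) = τ * w k)
    -- `U` is the block matrix with columns `(0; v)` and `(u; 0)`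
    (U : (Fin m₁ ⊕ Fin m₂) → Fin 2 → ℝ)
    (hUl : ∀ i, U (Sum.inl i) 0 = 0 ∧ U (Sum.inl i) 1 = u i)
    (hUr : ∀ j, U (Sum.inr j) 0 = v j ∧ U (Sum.inr j) 1 = 0) :
    ∀ (X Y : (Fin m₁ ⊕ Fin m₂) → Fin 2 → ℝ) (z : Fin n → ℝ),
      (∀ c c' : Fin 2, ∑ α, X α c * X α c' = if c = c' then 1 else 0) →
      (∀ c c' : Fin 2, ∑ α, Y α c * Y α c' = if c = c' then 1 else 0) →
      ∑ k, z k ^ 2 = 1 →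
      cnorm A X Y z ≤ cnorm A U U w := by
  intro X Y z hXo hYo hz
  have hAlr : ∀ a b k, A (Sum.inl a) (Sum.inr b) k = C a b k := fun a b k => (hA k).1 a b
  have hArl : ∀ a b k, A (Sum.inr b) (Sum.inl a) k = C a b k := fun a b k => (hA k).2.1 a b
  have hAll : ∀ a b k, A (Sum.inl a) (Sum.inl b) k = 0 := fun a b k => (hA k).2.2.1 a b
  have hArr : ∀ a b k, A (Sum.inr a) (Sum.inr b) k = 0 := fun a b k => (hA k).2.2.2 a b
  have hUl0 : ∀ i, U (Sum.inl i) 0 = 0 := fun i => (hUl i).1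
  have hUl1 : ∀ i, U (Sum.inl i) 1 = u i := fun i => (hUl i).2
  have hUr0 : ∀ j, U (Sum.inr j) 0 = v j := fun j => (hUr j).1
  have hUr1 : ∀ j, U (Sum.inr j) 1 = 0 := fun j => (hUr j).2
  -- the value of the contraction at the maximizer equals τ
  have hτ' : F3 C u v w = τ := by
    have h1 : F3 C u v w = ∑ k, (∑ i, ∑ j, C i j k * u i * v j) * w k := by
      rw [show F3 C u v w = ∑ i, ∑ j, ∑ k, C i j k * u i * v j * w k from rfl, aux_sum3_swap]
      refine Finset.sum_congr rfl fun k _ => ?_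
      rw [Finset.sum_mul]
      exact Finset.sum_congr rfl fun i _ => by rw [Finset.sum_mul]
    have h2 : ∑ k, (∑ i, ∑ j, C i j k * u i * v j) * w k = ∑ k, τ * (w k * w k) := by
      refine Finset.sum_congr rfl fun k _ => ?_
      rw [hCuv k]; ring
    have h3 : (∑ k, w k * w k) = 1 := by
      rw [← hw]; exact Finset.sum_congr rfl fun k _ => (pow_two _).symm
    rw [h1, h2, ← Finset.mul_sum, h3, mul_one]
  have hmax' : ∀ (x : Fin m₁ → ℝ) (y : Fin m₂ → ℝ) (zz : Fin n → ℝ),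
      ∑ i, x i ^ 2 = 1 → ∑ j, y j ^ 2 = 1 → ∑ k, zz k ^ 2 = 1 → |F3 C x y zz| ≤ τ := by
    intro x y zz h1 h2 h3
    have h := hmax x y zz h1 h2 h3
    have h4 : (∑ i, ∑ j, ∑ k, C i j k * u i * v j * w k) = τ := hτ'
    rw [h4] at h
    exact h
  -- splitting a full contraction into the two nonzero blocks
  have hsplit : ∀ (x y : (Fin m₁ ⊕ Fin m₂) → ℝ) (zz : Fin n → ℝ),
      (∑ α, ∑ β, ∑ γ, A α β γ * x α * y β * zz γ)
        = F3 C (fun a => x (Sum.inl a)) (fun b => y (Sum.inr b)) zz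
          + F3 C (fun a => y (Sum.inl a)) (fun b => x (Sum.inr b)) zz := by
    intro x y zz
    simp only [Fintype.sum_sum_type, hAll, hArr, hAlr, hArl, zero_mul,
      Finset.sum_const_zero, add_zero, zero_add]
    congr 1
    rw [show F3 C (fun a => y (Sum.inl a)) (fun b => x (Sum.inr b)) zz
          = ∑ a, ∑ b, ∑ γ, C a b γ * y (Sum.inl a) * x (Sum.inr b) * zz γ from rfl]
    exact Finset.sum_comm.trans (Finset.sum_congr rfl fun a _ =>
      Finset.sum_congr rfl fun b _ => Finset.sum_congr rfl fun γ _ => by ring)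
  -- the full contraction of A with unit vectors is bounded by τ
  have hG : ∀ (x y : (Fin m₁ ⊕ Fin m₂) → ℝ),
      (∑ α, x α ^ 2) = 1 → (∑ α, y α ^ 2) = 1 →
      |∑ α, ∑ β, ∑ γ, A α β γ * x α * y β * z γ| ≤ τ := by
    intro x y hx1 hy1
    rw [hsplit x y z]
    have hPn : (0:ℝ) ≤ ∑ a, x (Sum.inl a) ^ 2 := Finset.sum_nonneg fun _ _ => sq_nonneg _
    have hSn : (0:ℝ) ≤ ∑ b, x (Sum.inr b) ^ 2 := Finset.sum_nonneg fun _ _ => sq_nonneg _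
    have hQn : (0:ℝ) ≤ ∑ a, y (Sum.inl a) ^ 2 := Finset.sum_nonneg fun _ _ => sq_nonneg _
    have hRn : (0:ℝ) ≤ ∑ b, y (Sum.inr b) ^ 2 := Finset.sum_nonneg fun _ _ => sq_nonneg _
    have hPS : (∑ a, x (Sum.inl a) ^ 2) + (∑ b, x (Sum.inr b) ^ 2) = 1 := by
      rw [← hx1]; exact (Fintype.sum_sum_type (fun α => x α ^ 2)).symm
    have hQR : (∑ a, y (Sum.inl a) ^ 2) + (∑ b, y (Sum.inr b) ^ 2) = 1 := by
      rw [← hy1]; exact (Fintype.sum_sum_type (fun α => y α ^ 2)).symm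
    have b1' : |F3 C (fun a => x (Sum.inl a)) (fun b => y (Sum.inr b)) z|
        ≤ τ * (Real.sqrt (∑ a, x (Sum.inl a) ^ 2) * Real.sqrt (∑ b, y (Sum.inr b) ^ 2)) := by
      have h := F3_bound C τ hτ hmax' (fun a => x (Sum.inl a)) (fun b => y (Sum.inr b)) z
      rw [hz, Real.sqrt_one, mul_one] at h
      exact h
    have b2' : |F3 C (fun a => y (Sum.inl a)) (fun b => x (Sum.inr b)) z|
        ≤ τ * (Real.sqrt (∑ a, y (Sum.inl a) ^ 2) * Real.sqrt (∑ b, x (Sum.inr b) ^ 2)) := by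
      have h := F3_bound C τ hτ hmax' (fun a => y (Sum.inl a)) (fun b => x (Sum.inr b)) z
      rw [hz, Real.sqrt_one, mul_one] at h
      exact h
    set sP := Real.sqrt (∑ a, x (Sum.inl a) ^ 2) with hsP
    set sS := Real.sqrt (∑ b, x (Sum.inr b) ^ 2) with hsS
    set sQ := Real.sqrt (∑ a, y (Sum.inl a) ^ 2) with hsQ
    set sR := Real.sqrt (∑ b, y (Sum.inr b) ^ 2) with hsR
    have hsP0 : 0 ≤ sP := Real.sqrt_nonneg _
    have hsS0 : 0 ≤ sS := Real.sqrt_nonneg _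
    have hsQ0 : 0 ≤ sQ := Real.sqrt_nonneg _
    have hsR0 : 0 ≤ sR := Real.sqrt_nonneg _
    have hsP2 : sP ^ 2 = ∑ a, x (Sum.inl a) ^ 2 := Real.sq_sqrt hPn
    have hsS2 : sS ^ 2 = ∑ b, x (Sum.inr b) ^ 2 := Real.sq_sqrt hSn
    have hsQ2 : sQ ^ 2 = ∑ a, y (Sum.inl a) ^ 2 := Real.sq_sqrt hQn
    have hsR2 : sR ^ 2 = ∑ b, y (Sum.inr b) ^ 2 := Real.sq_sqrt hRn
    have ht : sP * sR + sQ * sS ≤ 1 := by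
      nlinarith [sq_nonneg (sP * sQ - sS * sR), sq_nonneg (sP * sR + sQ * sS - 1),
        mul_nonneg hsP0 hsR0, mul_nonneg hsQ0 hsS0,
        mul_nonneg (mul_nonneg hsP0 hsQ0) (mul_nonneg hsS0 hsR0)]
    calc |F3 C (fun a => x (Sum.inl a)) (fun b => y (Sum.inr b)) z
            + F3 C (fun a => y (Sum.inl a)) (fun b => x (Sum.inr b)) z|
        ≤ |F3 C (fun a => x (Sum.inl a)) (fun b => y (Sum.inr b)) z|
            + |F3 C (fun a => y (Sum.inl a)) (fun b => x (Sum.inr b)) z| := abs_add_le _ _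
      _ ≤ τ * (sP * sR) + τ * (sQ * sS) := add_le_add b1' b2'
      _ = τ * (sP * sR + sQ * sS) := by ring
      _ ≤ τ * 1 := mul_le_mul_of_nonneg_left ht hτ.le
      _ = τ := mul_one τ
  -- each column of the 2×2 contraction has squared norm ≤ τ²
  have hcol : ∀ j : Fin 2,
      (∑ α, ∑ β, ∑ γ, A α β γ * X α 0 * Y β j * z γ) ^ 2
        + (∑ α, ∑ β, ∑ γ, A α β γ * X α 1 * Y β j * z γ) ^ 2 ≤ τ ^ 2 := by
    intro j
    set b0 := ∑ α, ∑ β, ∑ γ, A α β γ * X α 0 * Y β j * z γ with hb0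
    set b1 := ∑ α, ∑ β, ∑ γ, A α β γ * X α 1 * Y β j * z γ with hb1
    by_cases hb : b0 ^ 2 + b1 ^ 2 = 0
    · nlinarith [hτ]
    · have hbpos : 0 < b0 ^ 2 + b1 ^ 2 := lt_of_le_of_ne (by positivity) (Ne.symm hb)
      set r := Real.sqrt (b0 ^ 2 + b1 ^ 2) with hrdef
      have hrpos : 0 < r := Real.sqrt_pos.mpr hbpos
      have hr2 : r ^ 2 = b0 ^ 2 + b1 ^ 2 := Real.sq_sqrt hbpos.le
      have hxt : ∑ α, (b0 / r * X α 0 + b1 / r * X α 1) ^ 2 = 1 := by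
        have expand : ∑ α, (b0 / r * X α 0 + b1 / r * X α 1) ^ 2
            = (b0 / r) ^ 2 * (∑ α, X α 0 * X α 0)
              + (2 * (b0 / r) * (b1 / r)) * (∑ α, X α 0 * X α 1)
              + (b1 / r) ^ 2 * (∑ α, X α 1 * X α 1) := by
          simp only [Finset.mul_sum, ← Finset.sum_add_distrib]
          exact Finset.sum_congr rfl fun α _ => by ring
        rw [expand, hXo 0 0, hXo 0 1, hXo 1 1, if_pos rfl, if_pos rfl,
          if_neg (by decide : ¬(0:Fin 2) = 1), mul_one, mul_zero, add_zero, mul_one]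
        rw [div_pow, div_pow, ← add_div, ← hr2, div_self (pow_ne_zero 2 hrpos.ne')]
      have hyt : ∑ β, Y β j ^ 2 = 1 := by
        have h := hYo j j
        rw [if_pos rfl] at h
        calc ∑ β, Y β j ^ 2 = ∑ β, Y β j * Y β j :=
              Finset.sum_congr rfl fun β _ => pow_two _
          _ = 1 := h
      have hlin : (∑ α, ∑ β, ∑ γ, A α β γ * (b0 / r * X α 0 + b1 / r * X α 1) * Y β j * z γ)
          = b0 / r * b0 + b1 / r * b1 := by
        have expand : (∑ α, ∑ β, ∑ γ, A α β γ * (b0 / r * X α 0 + b1 / r * X α 1) * Y β j * z γ)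
            = b0 / r * (∑ α, ∑ β, ∑ γ, A α β γ * X α 0 * Y β j * z γ)
              + b1 / r * (∑ α, ∑ β, ∑ γ, A α β γ * X α 1 * Y β j * z γ) := by
          simp only [Finset.mul_sum, ← Finset.sum_add_distrib]
          exact Finset.sum_congr rfl fun α _ => Finset.sum_congr rfl fun β _ =>
            Finset.sum_congr rfl fun γ _ => by ring
        rw [expand, ← hb0, ← hb1]
      have hGapp : |b0 / r * b0 + b1 / r * b1| ≤ τ := by
        rw [← hlin]
        exact hG (fun α => b0 / r * X α 0 + b1 / r * X α 1) (fun β => Y β j) hxt hyt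
      have hval : b0 / r * b0 + b1 / r * b1 = r := by
        have h5 : b0 / r * b0 + b1 / r * b1 = (b0 ^ 2 + b1 ^ 2) / r := by ring
        rw [h5, ← hr2, pow_two, mul_div_assoc, div_self hrpos.ne', mul_one]
      rw [hval] at hGapp
      have hrτ : r ≤ τ := (le_abs_self r).trans hGapp
      calc b0 ^ 2 + b1 ^ 2 = r ^ 2 := hr2.symm
        _ ≤ τ ^ 2 := pow_le_pow_left₀ hrpos.le hrτ 2
  -- the value at (U, U, w)
  have e : ∀ i j : Fin 2,
      (∑ α, ∑ β, ∑ γ, A α β γ * U α i * U β j * w γ)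
        = F3 C (fun a => U (Sum.inl a) i) (fun b => U (Sum.inr b) j) w
          + F3 C (fun a => U (Sum.inl a) j) (fun b => U (Sum.inr b) i) w :=
    fun i j => hsplit (fun α => U α i) (fun α => U α j) w
  have hz1 : ∀ (y : Fin m₂ → ℝ), F3 C (fun a => U (Sum.inl a) 0) y w = 0 := by
    intro y; simp [F3, hUl0]
  have hz2 : ∀ (x : Fin m₁ → ℝ), F3 C x (fun b => U (Sum.inr b) 1) w = 0 := by
    intro x; simp [F3, hUr1]
  have h10 : F3 C (fun a => U (Sum.inl a) 1) (fun b => U (Sum.inr b) 0) w = τ := by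
    have h1 : (fun a => U (Sum.inl a) 1) = u := funext hUl1
    have h2 : (fun b => U (Sum.inr b) 0) = v := funext hUr0
    rw [h1, h2, hτ']
  have hRHS : (∑ i, ∑ j, (∑ α, ∑ β, ∑ γ, A α β γ * U α i * U β j * w γ) ^ 2) = 2 * τ ^ 2 := by
    simp only [Fin.sum_univ_two]
    rw [e 0 0, e 0 1, e 1 0, e 1 1]
    simp only [hz1, hz2, h10, add_zero, zero_add]
    ring
  unfold cnorm
  apply Real.sqrt_le_sqrt
  rw [hRHS]
  simp only [Fin.sum_univ_two]
  linarith [hcol 0, hcol 1]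
end
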